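/- In Cl₅, the element ε = −e₁e₂e₃e₄ satisfies ε² = 1 and reverse(ε) = ε. Moreover, for all real numbers s₀,…,s₁₅, the sedenion-like number S = s₀ + s₁e₀e₁ + s₂e₀e₂ + s₃e₀e₃ + s₄e₁e₂ + s₅e₃e₁ + s₆e₂e₃ + s₇e₀e₁e₂e₃ + s₈e₀e₄ + s₉e₁e₄ + s₁₀e₂e₄ + s₁₁e₃e₄ + s₁₂e₀e₂e₁e₄ + s₁₃e₀e₁e₃e₄ + s₁₄e₀e₃e₂e₄ + s₁₅e₁e₂e₃e₄ decomposes as S = S_r + S_d·ε, where S_r = s₀ + s₁e₀e₁ + s₂e₀e₂ + s₃e₀e₃ + s₄e₁e₂ + s₅e₃e₁ + s₆e₂e₃ + s₇e₀e₁e₂e₃ and S_d = −s₁₅ + s₁₄e₀e₁ + s₁₃e₀e₂ + s₁₂e₀e₃ + s₁₁e₁e₂ + s₁₀e₃e₁ + s₉e₂e₃ + s₈e₀e₁e₂e₃. -/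
import Mathlib


open CliffordAlgebra

/-- The positive-definite quadratic form `Q₅(v) = v₀² + ⋯ + v₄²` on `ℝ⁵`. -/
noncomputable def Q5 : QuadraticForm ℝ (Fin 5 → ℝ) :=
  QuadraticMap.weightedSumSquares ℝ (fun _ : Fin 5 => (1 : ℝ))

/-- The generators `e i` of the Clifford algebra `Cl₅ = Cl_{5,0}`. -/
noncomputable def e (i : Fin 5) : CliffordAlgebra Q5 :=
  CliffordAlgebra.ι Q5 (Pi.single i 1)

-- auxiliary lemmas
lemma Q5_single (i : Fin 5) : Q5 (Pi.single i 1) = 1 := by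
  simp [Q5, QuadraticMap.weightedSumSquares_apply, Pi.single_apply]

lemma esq (i : Fin 5) : e i * e i = 1 := by
  rw [e, ι_sq_scalar, Q5_single, map_one]

lemma eswap {i j : Fin 5} (h : i ≠ j) : e i * e j = -(e j * e i) := by
  have h2 := CliffordAlgebra.ι_mul_ι_add_swap (Q := Q5) (Pi.single i 1) (Pi.single j 1)
  have hz : QuadraticMap.polar Q5 (Pi.single i 1) (Pi.single j 1) = 0 := by
    rw [QuadraticMap.polar]
    have h5 : Q5 (Pi.single i 1 + Pi.single j 1) = 2 := by
      simp only [Q5, QuadraticMap.weightedSumSquares_apply, Pi.add_apply, Pi.single_apply,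
        smul_eq_mul, one_mul]
      have key : ∀ x : Fin 5, ((if x = i then (1:ℝ) else 0) + if x = j then 1 else 0) *
          ((if x = i then (1:ℝ) else 0) + if x = j then 1 else 0) =
          (if x = i then (1:ℝ) else 0) + (if x = j then 1 else 0) := by
        intro x; split_ifs <;> simp_all
      rw [Finset.sum_congr rfl fun x _ => key x]
      simp [Finset.sum_add_distrib, Finset.sum_ite_eq]
      norm_num
    rw [h5, Q5_single, Q5_single]; ring
  rw [hz, map_zero] at h2
  exact eq_neg_of_add_eq_zero_left h2

lemma eswap' {i j : Fin 5} (h : j < i) : e i * e j = -(e j * e i) :=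
  eswap (ne_of_gt h)

lemma eswapl {i j : Fin 5} (h : j < i) (x : CliffordAlgebra Q5) :
    e i * (e j * x) = -(e j * (e i * x)) := by
  rw [← mul_assoc, eswap' h, neg_mul, mul_assoc]

lemma reverse_e (i : Fin 5) : reverse (e i) = e i := reverse_ι _

lemma esql (i : Fin 5) (x : CliffordAlgebra Q5) : e i * (e i * x) = x := by
  rw [← mul_assoc, esq, one_mul]


/-- In `Cl₅`, `ε = −e₁e₂e₃e₄` satisfies `ε² = 1` and `reverse ε = ε`, and every
sedenion-like number `S` decomposes as `S = S_r + S_d·ε` with octonion-like parts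
`S_r`, `S_d`. -/
theorem sedenionLike_dual_decomposition
    (s₀ s₁ s₂ s₃ s₄ s₅ s₆ s₇ s₈ s₉ s₁₀ s₁₁ s₁₂ s₁₃ s₁₄ s₁₅ : ℝ) :
    (-(e 1 * e 2 * e 3 * e 4))^2 = 1 ∧
    reverse (-(e 1 * e 2 * e 3 * e 4)) = -(e 1 * e 2 * e 3 * e 4) ∧
    (s₀ • (1 : CliffordAlgebra Q5) +
      s₁ • (e 0 * e 1) +
      s₂ • (e 0 * e 2) +
      s₃ • (e 0 * e 3) +
      s₄ • (e 1 * e 2) +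
      s₅ • (e 3 * e 1) +
      s₆ • (e 2 * e 3) +
      s₇ • (e 0 * e 1 * e 2 * e 3) +
      s₈ • (e 0 * e 4) +
      s₉ • (e 1 * e 4) +
      s₁₀ • (e 2 * e 4) +
      s₁₁ • (e 3 * e 4) +
      s₁₂ • (e 0 * e 2 * e 1 * e 4) +
      s₁₃ • (e 0 * e 1 * e 3 * e 4) +
      s₁₄ • (e 0 * e 3 * e 2 * e 4) +
      s₁₅ • (e 1 * e 2 * e 3 * e 4)) =
      (s₀ • (1 : CliffordAlgebra Q5) + s₁ • (e 0 * e 1) + s₂ • (e 0 * e 2) +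
      s₃ • (e 0 * e 3) + s₄ • (e 1 * e 2) + s₅ • (e 3 * e 1) + s₆ • (e 2 * e 3) +
      s₇ • (e 0 * e 1 * e 2 * e 3)) +
      ((-s₁₅) • (1 : CliffordAlgebra Q5) + s₁₄ • (e 0 * e 1) + s₁₃ • (e 0 * e 2) +
      s₁₂ • (e 0 * e 3) + s₁₁ • (e 1 * e 2) + s₁₀ • (e 3 * e 1) + s₉ • (e 2 * e 3) +
      s₈ • (e 0 * e 1 * e 2 * e 3)) * (-(e 1 * e 2 * e 3 * e 4)) := by
  refine ⟨?_, ?_, ?_⟩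
  · simp only [neg_pow, pow_two, mul_assoc]
    simp (disch := decide) only [mul_assoc, eswapl, esql, eswap', esq, mul_neg, neg_mul, neg_neg, mul_one]
  · rw [map_neg, reverse.map_mul, reverse.map_mul, reverse.map_mul]
    simp only [reverse_e]
    simp (disch := decide) only [mul_assoc, eswapl, esql, eswap', esq, mul_neg, neg_mul, neg_neg, mul_one]
  · simp only [add_mul, smul_mul_assoc, one_mul, mul_assoc, mul_neg, neg_mul]
    simp (disch := decide) only [mul_assoc, eswapl, esql, eswap', esq, mul_neg, neg_mul, neg_neg, mul_one,
      smul_neg, neg_smul]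
    module
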